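/- Let R be a multiplicatively cancellative commutative semiring of characteristic one. Then for every n ≥ 1, x ↦ x^n is a semiring endomorphism of R: it is additive, multiplicative, sends 0 to 0 and 1 to 1, and is injective. -/

import Mathlib

section Aux
variable {R : Type*} [CommSemiring R]

private lemma aux_idem (h1 : (1 : R) + 1 = 1) (a : R) : a + a = a := by
  calc a + a = (1 + 1) * a := by ring
  _ = a := by rw [h1, one_mul]

private lemma aux_cast_eq_one (h1 : (1 : R) + 1 = 1) :
    ∀ m : ℕ, 0 < m → ((m : ℕ) : R) = 1 := by
  intro m hm
  induction m with
  | zero => omega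
  | succ k ih =>
    rcases Nat.eq_zero_or_pos k with h | h
    · subst h; simp
    · push_cast [ih h]; exact h1

private lemma aux_le_pow (h1 : (1 : R) + 1 = 1) {a b : R} (h : a + b = b) :
    ∀ n, a ^ n + b ^ n = b ^ n
  | 0 => by simpa using h1
  | (n + 1) => by
    have ih := aux_le_pow h1 h n
    have hb : b ^ (n + 1) = a ^ n * b + b ^ (n + 1) := by
      calc b ^ (n + 1) = (a ^ n + b ^ n) * b := by rw [ih]; ring
      _ = a ^ n * b + b ^ (n + 1) := by ring
    calc a ^ (n + 1) + b ^ (n + 1) = a ^ (n + 1) + (a ^ n * b + b ^ (n + 1)) := by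
          conv_lhs => rw [hb]
    _ = a ^ n * (a + b) + b ^ (n + 1) := by ring
    _ = a ^ n * b + b ^ (n + 1) := by rw [h]
    _ = b ^ (n + 1) := hb.symm

private lemma aux_add_pow (h1 : (1 : R) + 1 = 1) (n : ℕ) (x y : R) :
    (x + y) ^ n = ∑ k ∈ Finset.range (n + 1), x ^ k * y ^ (n - k) := by
  rw [add_pow]
  refine Finset.sum_congr rfl fun k hk => ?_
  rw [aux_cast_eq_one h1 _ (Nat.choose_pos (by simpa [Nat.lt_succ_iff] using hk)), mul_one]

private lemma aux_s_mul (h1 : (1 : R) + 1 = 1) (n : ℕ) (x y : R) :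
    (∑ k ∈ Finset.range (n + 1), x ^ k * y ^ (n - k)) * (x ^ n + y ^ n)
      = ∑ j ∈ Finset.range (2 * n + 1), x ^ j * y ^ (2 * n - j) := by
  set f : ℕ → R := fun j => x ^ j * y ^ (2 * n - j) with hf
  have hyn : (∑ k ∈ Finset.range (n + 1), x ^ k * y ^ (n - k)) * y ^ n
      = ∑ k ∈ Finset.range (n + 1), f k := by
    rw [Finset.sum_mul]
    refine Finset.sum_congr rfl fun k hk => ?_
    have hk' : k ≤ n := by simpa [Nat.lt_succ_iff] using hk
    rw [hf]; dsimp only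
    rw [mul_assoc, ← pow_add]
    congr 2
    omega
  have hxn : (∑ k ∈ Finset.range (n + 1), x ^ k * y ^ (n - k)) * x ^ n
      = ∑ j ∈ Finset.Ico n (2 * n + 1), f j := by
    rw [Finset.sum_Ico_eq_sum_range, Finset.sum_mul]
    have h2 : 2 * n + 1 - n = n + 1 := by omega
    rw [h2]
    refine Finset.sum_congr rfl fun k hk => ?_
    have hk' : k ≤ n := by simpa [Nat.lt_succ_iff] using hk
    rw [hf]; dsimp only
    rw [mul_comm (x ^ k * y ^ (n - k)) (x ^ n), ← mul_assoc, ← pow_add]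
    congr 2
    omega
  have hsplit : ∑ j ∈ Finset.range (2 * n + 1), f j
      = (∑ j ∈ Finset.range (n + 1), f j) + ∑ j ∈ Finset.Ico (n + 1) (2 * n + 1), f j := by
    rw [Finset.range_eq_Ico, Finset.range_eq_Ico]
    exact (Finset.sum_Ico_consecutive f (m := 0) (n := n + 1) (k := 2 * n + 1) (by omega) (by omega)).symm
  have hbot : ∑ j ∈ Finset.Ico n (2 * n + 1), f j
      = f n + ∑ j ∈ Finset.Ico (n + 1) (2 * n + 1), f j :=
    Finset.sum_eq_sum_Ico_succ_bot (by omega) f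
  have htop : ∑ j ∈ Finset.range (n + 1), f j
      = (∑ j ∈ Finset.range n, f j) + f n := Finset.sum_range_succ f n
  rw [mul_add, hxn, hyn, hbot, hsplit, htop]
  generalize ∑ j ∈ Finset.Ico (n + 1) (2 * n + 1), f j = B
  generalize ∑ j ∈ Finset.range n, f j = A
  calc f n + B + (A + f n) = A + (f n + f n) + B := by ring
  _ = A + f n + B := by rw [aux_idem h1]

private lemma aux_frob_add (h1 : (1 : R) + 1 = 1) (n : ℕ)
    (hcanc : ∀ x y z : R, x ≠ 0 → x * y = x * z → y = z) (x y : R) :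
    (x + y) ^ n = x ^ n + y ^ n := by
  have key : (x + y) ^ n * ((x + y) ^ n) = (x + y) ^ n * (x ^ n + y ^ n) := by
    calc (x + y) ^ n * (x + y) ^ n = (x + y) ^ (2 * n) := by ring
    _ = ∑ j ∈ Finset.range (2 * n + 1), x ^ j * y ^ (2 * n - j) := aux_add_pow h1 (2 * n) x y
    _ = (x + y) ^ n * (x ^ n + y ^ n) := by rw [aux_add_pow h1 n x y, aux_s_mul h1]
  by_cases ha : (x + y) ^ n = 0
  · have hx : x ^ n = 0 := by
      have h := aux_le_pow h1 (show x + (x + y) = x + y by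
        rw [← add_assoc, aux_idem h1]) n
      rw [ha, add_zero] at h
      exact h
    have hy : y ^ n = 0 := by
      have h := aux_le_pow h1 (show y + (x + y) = x + y by
        rw [add_comm x y, ← add_assoc, aux_idem h1]) n
      rw [ha, add_zero] at h
      exact h
    rw [ha, hx, hy, add_zero]
  · exact hcanc _ _ _ ha key

private lemma aux_pow_eq_zero (hcanc : ∀ x y z : R, x ≠ 0 → x * y = x * z → y = z) :
    ∀ (n : ℕ) (a : R), a ^ n = 0 → a = 0
  | 0, a, h => by
    rw [pow_zero] at h
    calc a = a * 1 := (mul_one a).symm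
    _ = a * 0 := by rw [h]
    _ = 0 := mul_zero a
  | (n + 1), a, h => by
    by_cases ha : a = 0
    · exact ha
    · refine aux_pow_eq_zero hcanc n a (hcanc a _ _ ha ?_)
      rw [mul_zero, ← pow_succ']
      exact h

private lemma aux_le_antisymm_pow (h1 : (1 : R) + 1 = 1) (m : ℕ)
    (hcanc : ∀ x y z : R, x ≠ 0 → x * y = x * z → y = z)
    {a b : R} (hab : a + b = b) (hpow : a ^ (m + 1) = b ^ (m + 1)) : a = b := by
  have h1' : a ^ (m + 1) + a ^ m * b = a ^ m * b := by
    calc a ^ (m + 1) + a ^ m * b = a ^ m * (a + b) := by ring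
    _ = a ^ m * b := by rw [hab]
  have h2' : a ^ m * b + a ^ (m + 1) = a ^ (m + 1) := by
    have hp := aux_le_pow h1 hab m
    calc a ^ m * b + a ^ (m + 1) = (a ^ m + b ^ m) * b := by rw [hpow]; ring
    _ = b ^ m * b := by rw [hp]
    _ = a ^ (m + 1) := by rw [hpow, pow_succ]
  have hkey : a ^ m * a = a ^ m * b := by
    calc a ^ m * a = a ^ (m + 1) := by ring
    _ = a ^ m * b + a ^ (m + 1) := h2'.symm
    _ = a ^ (m + 1) + a ^ m * b := by ring
    _ = a ^ m * b := h1'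
  by_cases hm : a ^ m = 0
  · have ha : a = 0 := aux_pow_eq_zero hcanc m a hm
    have hb : b = 0 := by
      refine aux_pow_eq_zero hcanc (m + 1) b ?_
      rw [← hpow, ha, zero_pow (by omega)]
    rw [ha, hb]
  · exact hcanc _ _ _ hm hkey

end Aux

theorem char_one_frobenius_endomorphism {R : Type*} [CommSemiring R]
    (h1 : (1 : R) + 1 = 1)
    (hcanc : ∀ x y z : R, x ≠ 0 → x * y = x * z → y = z)
    (n : ℕ) (hn : 1 ≤ n) :
    (∀ x y : R, (x + y) ^ n = x ^ n + y ^ n) ∧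
    (∀ x y : R, (x * y) ^ n = x ^ n * y ^ n) ∧
    ((0 : R) ^ n = 0) ∧ ((1 : R) ^ n = 1) ∧
    Function.Injective (fun x : R => x ^ n) := by
  obtain ⟨m, rfl⟩ : ∃ m, n = m + 1 := ⟨n - 1, by omega⟩
  refine ⟨aux_frob_add h1 _ hcanc, fun x y => mul_pow x y _, zero_pow (by omega), one_pow _, ?_⟩
  intro x y h
  simp only at h
  have hx : x = x + y := by
    refine aux_le_antisymm_pow h1 m hcanc
      (show x + (x + y) = x + y by rw [← add_assoc, aux_idem h1]) ?_
    rw [aux_frob_add h1 _ hcanc, h, aux_idem h1]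
  have hy : y = x + y := by
    refine aux_le_antisymm_pow h1 m hcanc
      (show y + (x + y) = x + y by rw [add_comm x y, ← add_assoc, aux_idem h1]) ?_
    rw [aux_frob_add h1 _ hcanc, ← h, aux_idem h1]
  exact hx.trans hy.symm
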